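/- Let (X, ‖·‖) be a quasi-normed vector space with quasi-triangle constant C ≥ 1. If {x_n} is a sequence in X such that there exists γ ∈ [0,1) with ‖x_{n+1} − x_n‖ ≤ γ‖x_n − x_{n−1}‖ for all n ≥ 1, then {x_n} is a Cauchy sequence (with respect to the quasi-metric d(x,y) = ‖x − y‖). -/

import Mathlib

/-- Bound coefficient for the block decomposition: `eAux C γ j t` bounds
(up to a factor `A γ^n`) the quasi-norm of `x m - x n` when the interval has
length at most `2^j (2^t - 1)` and blocks start at size `2^j`. -/
noncomputable def eAux (C γ : ℝ) : ℕ → ℕ → ℝ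
  | _, 0 => 0
  | j, (t+1) => C * (2*C)^j + C * γ^(2^j) * eAux C γ (j+1) t

/-- Uniform bound for `eAux C γ (j0 - k) t`. -/
noncomputable def bbAux (C : ℝ) (j0 : ℕ) : ℕ → ℝ
  | 0 => 2*C*(2*C)^j0
  | (k+1) => C*(2*C)^j0 + C * bbAux C j0 k

/-- In a quasi-normed vector space, a sequence with geometrically
contracting consecutive differences is Cauchy w.r.t. the quasi-metric. -/
theorem stmt_0 {X : Type*} [AddCommGroup X] [Module ℝ X] (Nm : X → ℝ) (C : ℝ)
    (hC : 1 ≤ C)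
    (hnn : ∀ x, 0 ≤ Nm x)
    (h0 : ∀ x, Nm x = 0 ↔ x = 0)
    (h1 : ∀ (r : ℝ) (x : X), Nm (r • x) = |r| * Nm x)
    (h2 : ∀ x y, Nm (x + y) ≤ C * (Nm x + Nm y))
    (x : ℕ → X) (γ : ℝ) (hγ0 : 0 ≤ γ) (hγ1 : γ < 1)
    (hrec : ∀ n : ℕ, 1 ≤ n → Nm (x (n + 1) - x n) ≤ γ * Nm (x n - x (n - 1))) :
    ∀ ε > 0, ∃ N : ℕ, ∀ m ≥ N, ∀ n ≥ N, Nm (x m - x n) < ε := by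
  intro ε hε
  have hC0 : (0:ℝ) < C := lt_of_lt_of_le one_pos hC
  have hNm0 : Nm 0 = 0 := by
    have := h1 0 0
    simpa using this
  have hneg : ∀ v : X, Nm (-v) = Nm v := by
    intro v
    have := h1 (-1) v
    simpa using this
  set A := Nm (x 1 - x 0) with hA
  have hA0 : 0 ≤ A := hnn _
  -- geometric decay of consecutive differences
  have hd : ∀ k : ℕ, Nm (x (k+1) - x k) ≤ γ^k * A := by
    intro k
    induction k with
    | zero => simp [hA]
    | succ k ih =>
      have h := hrec (k+1) (by omega)
      simp only [Nat.add_sub_cancel] at h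
      calc Nm (x (k+1+1) - x (k+1)) ≤ γ * Nm (x (k+1) - x k) := h
        _ ≤ γ * (γ^k * A) := mul_le_mul_of_nonneg_left ih hγ0
        _ = γ^(k+1) * A := by ring
  -- balanced dyadic bound: intervals of length ≤ 2^j
  have hP : ∀ j n m : ℕ, n ≤ m → m ≤ n + 2^j →
      Nm (x m - x n) ≤ (2*C)^j * (γ^n * A) := by
    intro j
    induction j with
    | zero =>
      intro n m hnm hm
      have hcase : m = n ∨ m = n + 1 := by omega
      rcases hcase with h | h
      · subst h; simp only [sub_self, hNm0, pow_zero, one_mul]; positivity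
      · subst h
        simpa using hd n
    | succ j ih =>
      intro n m hnm hm
      by_cases hc : m ≤ n + 2^j
      · have h := ih n m hnm hc
        have h2C : (2*C)^j ≤ (2*C)^(j+1) := by
          have hpnn : (0:ℝ) ≤ (2*C)^j := by positivity
          calc (2*C)^j = 1 * (2*C)^j := (one_mul _).symm
            _ ≤ (2*C) * (2*C)^j := by nlinarith
            _ = (2*C)^(j+1) := by ring
        have hnnn : (0:ℝ) ≤ γ^n * A := by positivity
        calc Nm (x m - x n) ≤ (2*C)^j * (γ^n * A) := h
          _ ≤ (2*C)^(j+1) * (γ^n * A) := mul_le_mul_of_nonneg_right h2C hnnn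
      · set p := n + 2^j with hp
        have hpm : p ≤ m := by omega
        have hm2 : m ≤ p + 2^j := by
          have hps : (2:ℕ)^(j+1) = 2^j + 2^j := by ring
          omega
        have e1 := ih p m hpm hm2
        have e2 := ih n p (Nat.le_add_right _ _) (le_refl _)
        have heq : x m - x n = (x m - x p) + (x p - x n) := by abel
        have hγp : γ^p * A ≤ γ^n * A :=
          mul_le_mul_of_nonneg_right
            (pow_le_pow_of_le_one hγ0 hγ1.le (Nat.le_add_right _ _)) hA0
        have hpj : (0:ℝ) ≤ (2*C)^j := by positivity
        calc Nm (x m - x n) = Nm ((x m - x p) + (x p - x n)) := by rw [← heq]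
          _ ≤ C * (Nm (x m - x p) + Nm (x p - x n)) := h2 _ _
          _ ≤ C * ((2*C)^j * (γ^p * A) + (2*C)^j * (γ^n * A)) := by
              apply mul_le_mul_of_nonneg_left (add_le_add e1 e2) hC0.le
          _ ≤ C * ((2*C)^j * (γ^n * A) + (2*C)^j * (γ^n * A)) := by
              apply mul_le_mul_of_nonneg_left _ hC0.le
              apply add_le_add_left
              exact mul_le_mul_of_nonneg_left hγp hpj
          _ = (2*C)^(j+1) * (γ^n * A) := by ring
  -- nonnegativity of eAux
  have heNN : ∀ t j, 0 ≤ eAux C γ j t := by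
    intro t
    induction t with
    | zero => intro j; simp [eAux]
    | succ t ih =>
      intro j
      simp only [eAux]
      have hg : (0:ℝ) ≤ γ^(2^j) := by positivity
      exact add_nonneg (by positivity) (mul_nonneg (mul_nonneg hC0.le hg) (ih (j+1)))
  -- main block estimate
  have hK : ∀ t j n m : ℕ, n ≤ m → m ≤ n + 2^j * (2^t - 1) →
      Nm (x m - x n) ≤ A * γ^n * eAux C γ j t := by
    intro t
    induction t with
    | zero =>
      intro j n m hnm hm
      have : m = n := by simp at hm; omega
      subst this
      simp [eAux, hNm0]
    | succ t ih =>
      intro j n m hnm hm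
      have he' : 0 ≤ eAux C γ (j+1) t := heNN t (j+1)
      by_cases hc : m ≤ n + 2^j
      · have h := hP j n m hnm hc
        have hstep : (2*C)^j * (γ^n * A) ≤ A * γ^n * eAux C γ j (t+1) := by
          simp only [eAux]
          have hpj : (0:ℝ) ≤ (2*C)^j := by positivity
          have hg : (0:ℝ) ≤ γ^(2^j) := by positivity
          have hgn : (0:ℝ) ≤ γ^n := by positivity
          nlinarith [mul_nonneg (mul_nonneg hgn hA0) (mul_nonneg hg he'),
            mul_nonneg (mul_nonneg hgn hA0) hpj]
        linarith
      · set p := n + 2^j with hp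
        have hpm : p ≤ m := by omega
        have hb1 : (1:ℕ) ≤ 2^t := Nat.one_le_two_pow
        have hm2 : m ≤ p + 2^(j+1) * (2^t - 1) := by
          obtain ⟨c, hc2⟩ : ∃ c, 2^t = c + 1 := ⟨2^t - 1, by omega⟩
          have hj1 : (2:ℕ)^(j+1) = 2 * 2^j := by ring
          have ht1 : (2:ℕ)^(t+1) = 2 * 2^t := by ring
          rw [hj1]
          rw [hc2]
          simp only [Nat.add_sub_cancel]
          rw [ht1, hc2] at hm
          have key : 2^j * (2 * (c+1) - 1) = 2^j + 2 * 2^j * c := by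
            have : 2 * (c+1) - 1 = 2*c + 1 := by omega
            rw [this]; ring
          rw [key] at hm
          omega
        have e1 := ih (j+1) p m hpm hm2
        have e2 := hP j n p (Nat.le_add_right _ _) (le_refl _)
        have heq : x m - x n = (x m - x p) + (x p - x n) := by abel
        have hγp : γ^p = γ^n * γ^(2^j) := pow_add γ n (2^j)
        calc Nm (x m - x n) = Nm ((x m - x p) + (x p - x n)) := by rw [← heq]
          _ ≤ C * (Nm (x m - x p) + Nm (x p - x n)) := h2 _ _
          _ ≤ C * (A * γ^p * eAux C γ (j+1) t + (2*C)^j * (γ^n * A)) := by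
              apply mul_le_mul_of_nonneg_left (add_le_add e1 e2) hC0.le
          _ = A * γ^n * (C * (2*C)^j + C * γ^(2^j) * eAux C γ (j+1) t) := by
              rw [hγp]; ring
          _ = A * γ^n * eAux C γ j (t+1) := by simp [eAux]
  -- bound for eAux once γ^(2^j) is small
  have hebound : ∀ t j, 4*C^2*γ^(2^j) ≤ 1 → eAux C γ j t ≤ 2*C*(2*C)^j := by
    intro t
    induction t with
    | zero => intro j hj; simp only [eAux]; positivity
    | succ t ih =>
      intro j hj
      have hg0 : (0:ℝ) ≤ γ^(2^j) := by positivity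
      have hgle1 : γ^(2^j) ≤ 1 := by nlinarith
      have hj' : 4*C^2*γ^(2^(j+1)) ≤ 1 := by
        have hsq : γ^(2^(j+1)) = γ^(2^j) * γ^(2^j) := by
          rw [← pow_add]
          congr 1
          ring
        rw [hsq]
        nlinarith
      have hIH := ih (j+1) hj'
      have hIH' : eAux C γ (j+1) t ≤ 4*C^2*(2*C)^j := by
        calc eAux C γ (j+1) t ≤ 2*C*(2*C)^(j+1) := hIH
          _ = 4*C^2*(2*C)^j := by ring
      have hE0 := heNN t (j+1)
      have hpw : (0:ℝ) ≤ (2*C)^j := by positivity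
      simp only [eAux]
      have step1 : C * γ^(2^j) * eAux C γ (j+1) t ≤ C * γ^(2^j) * (4*C^2*(2*C)^j) := by
        apply mul_le_mul_of_nonneg_left hIH' (by positivity)
      have step2 : C * γ^(2^j) * (4*C^2*(2*C)^j) ≤ C * (2*C)^j := by
        have hre : C*γ^(2^j)*(4*C^2*(2*C)^j) = (4*C^2*γ^(2^j)) * (C*(2*C)^j) := by ring
        rw [hre]
        nlinarith [mul_nonneg hC0.le hpw]
      calc C * (2*C)^j + C * γ^(2^j) * eAux C γ (j+1) t
          ≤ C * (2*C)^j + C * (2*C)^j := by linarith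
        _ = 2*C*(2*C)^j := by ring
  -- find j0 with 4C²γ^(2^j0) ≤ 1
  obtain ⟨j0, hj0⟩ : ∃ j0 : ℕ, 4*C^2*γ^(2^j0) ≤ 1 := by
    obtain ⟨k, hk⟩ := exists_pow_lt_of_lt_one
      (show (0:ℝ) < 1/(4*C^2) by positivity) hγ1
    refine ⟨k, ?_⟩
    have h2k : γ^(2^k) ≤ γ^k :=
      pow_le_pow_of_le_one hγ0 hγ1.le (Nat.lt_two_pow_self (n := k)).le
    have hk' : γ^k * (4*C^2) < 1 := by
      rw [← lt_div_iff₀ (by positivity : (0:ℝ) < 4*C^2)]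
      simpa [one_div] using hk
    nlinarith
  -- bbAux properties
  have hbbNN : ∀ k, 0 ≤ bbAux C j0 k := by
    intro k
    induction k with
    | zero => simp only [bbAux]; positivity
    | succ k ih =>
      simp only [bbAux]
      have hp : (0:ℝ) ≤ (2*C)^j0 := by positivity
      nlinarith
  have hbbmono : ∀ k, bbAux C j0 k ≤ bbAux C j0 (k+1) := by
    intro k
    simp only [bbAux]
    have hp : (0:ℝ) ≤ (2*C)^j0 := by positivity
    have := hbbNN k
    nlinarith
  -- eAux (j0 - k) t ≤ bbAux k
  have hkb : ∀ k t, eAux C γ (j0 - k) t ≤ bbAux C j0 k := by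
    intro k
    induction k with
    | zero =>
      intro t
      simpa only [Nat.sub_zero, bbAux] using hebound t j0 hj0
    | succ k ih =>
      intro t
      cases t with
      | zero =>
        simp only [eAux]
        exact hbbNN (k+1)
      | succ s =>
        by_cases hk : k < j0
        · have hjj : j0 - (k+1) + 1 = j0 - k := by omega
          simp only [eAux, bbAux]
          have hIH : eAux C γ (j0 - (k+1) + 1) s ≤ bbAux C j0 k := by
            rw [hjj]; exact ih s
          have hE0 : 0 ≤ eAux C γ (j0 - (k+1) + 1) s := heNN s _
          have hpj : (2*C)^(j0-(k+1)) ≤ (2*C)^j0 :=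
            pow_le_pow_right₀ (by linarith) (Nat.sub_le _ _)
          have hg1 : γ^(2^(j0-(k+1))) ≤ 1 := pow_le_one₀ hγ0 hγ1.le
          have hg0 : (0:ℝ) ≤ γ^(2^(j0-(k+1))) := by positivity
          have hbk := hbbNN k
          have t1 : C * (2*C)^(j0-(k+1)) ≤ C * (2*C)^j0 :=
            mul_le_mul_of_nonneg_left hpj hC0.le
          have hge : γ^(2^(j0-(k+1))) * eAux C γ (j0-(k+1)+1) s ≤ bbAux C j0 k :=
            le_trans (by nlinarith) hIH
          have t2 : C * γ^(2^(j0-(k+1))) * eAux C γ (j0-(k+1)+1) s ≤ C * bbAux C j0 k := by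
            calc C * γ^(2^(j0-(k+1))) * eAux C γ (j0-(k+1)+1) s
                = C * (γ^(2^(j0-(k+1))) * eAux C γ (j0-(k+1)+1) s) := by ring
              _ ≤ C * bbAux C j0 k := mul_le_mul_of_nonneg_left hge hC0.le
          linarith
        · have hjj : j0 - (k+1) = j0 - k := by omega
          rw [hjj]
          exact le_trans (ih (s+1)) (hbbmono k)
  set M := bbAux C j0 j0 with hM
  have hM0 : 0 ≤ M := hbbNN j0
  have heM : ∀ t, eAux C γ 0 t ≤ M := by
    intro t
    have := hkb j0 t
    simpa [Nat.sub_self] using this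
  -- choose N
  obtain ⟨N, hN⟩ := exists_pow_lt_of_lt_one
    (show (0:ℝ) < ε/(A*M+1) by positivity) hγ1
  refine ⟨N, ?_⟩
  have key : ∀ n m : ℕ, N ≤ n → n ≤ m → Nm (x m - x n) < ε := by
    intro n m hNn hnm
    have hlen : m ≤ n + 2^0 * (2^(m-n) - 1) := by
      have ht := Nat.lt_two_pow_self (n := m-n)
      simp only [pow_zero, one_mul]
      omega
    have hb := hK (m-n) 0 n m hnm hlen
    have c1 : A * γ^n * eAux C γ 0 (m-n) ≤ A * γ^n * M := by
      apply mul_le_mul_of_nonneg_left (heM _) (by positivity)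
    have c2 : γ^n ≤ γ^N := pow_le_pow_of_le_one hγ0 hγ1.le hNn
    have hgN : (0:ℝ) ≤ γ^N := by positivity
    have hgn : (0:ℝ) ≤ γ^n := by positivity
    have c3 : A * γ^n * M ≤ (A*M+1) * γ^N := by
      nlinarith [mul_nonneg (mul_nonneg hA0 hM0) (sub_nonneg.mpr c2)]
    have c4 : (A*M+1) * γ^N < ε := by
      have hpos : (0:ℝ) < A*M+1 := by positivity
      have := mul_lt_mul_of_pos_left hN hpos
      calc (A*M+1) * γ^N < (A*M+1) * (ε/(A*M+1)) := this
        _ = ε := by field_simp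
    linarith
  intro m hm n hn
  rcases le_total n m with h | h
  · exact key n m hn h
  · have := key m n hm h
    have hrw : x m - x n = -(x n - x m) := by abel
    rw [hrw, hneg]
    exact this
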